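/- (Distribution formula for weighted (h,q)-Genocchi polynomials) Let q be a real number with 0 < q < 1, let α > 0 be real, let h be a positive integer, let x ≥ 0 be real, let a be an odd positive integer, and let n be a positive integer. Then G̃_{n,q}^{(α,h)}(x) = ([2]_q / [2]_{q^a}) · [a]_{q^α}^{n-1} · ∑_{i=0}^{a-1} (-1)^i q^{ih} G̃_{n,q^a}^{(α,h)}((x+i)/a). -/

import Mathlib

/-- The `q`-number `[x]_q = (1 - q^x)/(1 - q)` (real exponent, via `rpow`). -/
noncomputable def qnum (q x : ℝ) : ℝ := (1 - q ^ x) / (1 - q)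

/-- The weighted `(h,q)`-Genocchi polynomial
`G̃_{n,q}^{(α,h)}(x) = n·[2]_q·∑_{m≥0} (-1)^m q^{mh} [m+x]_{q^α}^{n-1}`
(for `n = 0` the prefactor `n` makes it `0`). -/
noncomputable def hqGenocchi (q α : ℝ) (h n : ℕ) (x : ℝ) : ℝ :=
  (n : ℝ) * qnum q 2 *
    ∑' m : ℕ, (-1 : ℝ) ^ m * q ^ (m * h) * (qnum (q ^ α) ((m : ℝ) + x)) ^ (n - 1)

lemma qnum_nonneg {Q : ℝ} (hQ0 : 0 < Q) (hQ1 : Q < 1) {u : ℝ} (hu : 0 ≤ u) :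
    0 ≤ qnum Q u := by
  have h1 : Q ^ u ≤ 1 := Real.rpow_le_one hQ0.le hQ1.le hu
  have h2 : (0:ℝ) < 1 - Q := by linarith
  exact div_nonneg (by linarith) h2.le

lemma qnum_le {Q : ℝ} (hQ0 : 0 < Q) (hQ1 : Q < 1) (u : ℝ) :
    qnum Q u ≤ 1 / (1 - Q) := by
  have h1 : 0 ≤ Q ^ u := Real.rpow_nonneg hQ0.le u
  have h2 : (0:ℝ) < 1 - Q := by linarith
  unfold qnum
  gcongr
  linarith

lemma summable_gen {Q β : ℝ} (hQ0 : 0 < Q) (hQ1 : Q < 1) (hβ : 0 < β)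
    {h : ℕ} (hh : 0 < h) (n : ℕ) {y : ℝ} (hy : 0 ≤ y) :
    Summable (fun m : ℕ => (-1:ℝ)^m * Q^(m*h) * (qnum (Q^β) ((m:ℝ)+y))^(n-1)) := by
  have hQβ0 : 0 < Q ^ β := Real.rpow_pos_of_pos hQ0 β
  have hQβ1 : Q ^ β < 1 := Real.rpow_lt_one hQ0.le hQ1 hβ
  apply Summable.of_norm
  have hgeo : Summable (fun m : ℕ => (1/(1 - Q^β))^(n-1) * (Q^h)^m) :=
    (summable_geometric_of_lt_one (pow_nonneg hQ0.le h)
      (pow_lt_one₀ hQ0.le hQ1 hh.ne')).mul_left _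
  apply hgeo.of_nonneg_of_le (fun m => norm_nonneg _)
  intro m
  have hq1 : 0 ≤ qnum (Q^β) ((m:ℝ)+y) :=
    qnum_nonneg hQβ0 hQβ1 (by positivity)
  have hq2 : qnum (Q^β) ((m:ℝ)+y) ≤ 1/(1-Q^β) := qnum_le hQβ0 hQβ1 _
  rw [norm_mul, norm_mul, norm_pow, norm_neg, norm_one, one_pow, one_mul,
    Real.norm_eq_abs, Real.norm_eq_abs, abs_pow, abs_pow, abs_of_pos hQ0,
    abs_of_nonneg hq1, mul_comm m h, pow_mul, mul_comm]
  gcongr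

lemma qnum_mul {Q : ℝ} (hQ0 : 0 < Q) (hQ1 : Q < 1) {b : ℝ} (hb : 0 < b) (u : ℝ) :
    qnum Q b * qnum (Q ^ b) u = qnum Q (b * u) := by
  have hb1 : Q ^ b < 1 := Real.rpow_lt_one hQ0.le hQ1 hb
  have h2 : (1:ℝ) - Q ^ b ≠ 0 := by linarith
  have h3 : (1:ℝ) - Q ≠ 0 := by linarith
  unfold qnum
  rw [← Real.rpow_mul hQ0.le]
  field_simp

set_option maxHeartbeats 1000000 in
theorem stmt6 (q α x : ℝ) (hq0 : 0 < q) (hq1 : q < 1) (hα : 0 < α) (h : ℕ) (hh : 0 < h)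
    (hx : 0 ≤ x) (a : ℕ) (ha : 0 < a) (hao : Odd a) (n : ℕ) (hn : 0 < n) :
    hqGenocchi q α h n x =
      (qnum q 2 / qnum (q ^ a) 2) * (qnum (q ^ α) (a : ℝ)) ^ (n - 1) *
        ∑ i ∈ Finset.range a, (-1 : ℝ) ^ i * q ^ (i * h) *
          hqGenocchi (q ^ a) α h n ((x + (i : ℝ)) / (a : ℝ)) := by
  haveI : NeZero a := ⟨ha.ne'⟩
  have haR : (0:ℝ) < (a:ℝ) := Nat.cast_pos.mpr ha
  have hQα0 : 0 < q ^ α := Real.rpow_pos_of_pos hq0 α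
  have hQα1 : q ^ α < 1 := Real.rpow_lt_one hq0.le hq1 hα
  have hqa0 : 0 < q ^ a := pow_pos hq0 a
  have hqa1 : q ^ a < 1 := pow_lt_one₀ hq0.le hq1 ha.ne'
  have h2q : (0:ℝ) < qnum (q ^ a) 2 := by
    have h1 : (q ^ a : ℝ) ^ (2:ℝ) < 1 := Real.rpow_lt_one hqa0.le hqa1 two_pos
    have h2 : (0:ℝ) < 1 - q ^ a := by linarith
    exact div_pos (by linarith) h2
  have hbase : ((q ^ a : ℝ)) ^ α = (q ^ α) ^ (a : ℝ) := by
    rw [← Real.rpow_natCast q a, ← Real.rpow_mul hq0.le, ← Real.rpow_mul hq0.le, mul_comm]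
  set A := qnum (q ^ α) (a : ℝ) with hA
  set F : ℕ → ℝ := fun m => (-1:ℝ)^m * q^(m*h) * (qnum (q^α) ((m:ℝ)+x))^(n-1) with hF
  have hFs : Summable F := summable_gen hq0 hq1 hα hh n hx
  set g : ℕ → ℕ → ℝ := fun i k =>
      (-1:ℝ)^k * (q^a)^(k*h) * (qnum ((q^a:ℝ)^α) ((k:ℝ) + (x + (i:ℝ))/(a:ℝ)))^(n-1) with hg
  have key : ∀ i, i < a → ∀ k : ℕ,
      F (k * a + i) = (A ^ (n-1) * ((-1:ℝ)^i * q^(i*h))) * g i k := by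
    intro i hi k
    have harg : (((k*a+i : ℕ)):ℝ) + x = (a:ℝ) * ((k:ℝ) + (x + (i:ℝ))/(a:ℝ)) := by
      push_cast
      field_simp
      ring
    have hqn : qnum (q^α) ((((k*a+i:ℕ)):ℝ) + x)
        = A * qnum ((q^a:ℝ)^α) ((k:ℝ) + (x+(i:ℝ))/(a:ℝ)) := by
      rw [hbase, harg, hA, qnum_mul hQα0 hQα1 haR]
    have hsign : ((-1:ℝ))^(k*a+i) = (-1:ℝ)^k * (-1:ℝ)^i := by
      rw [pow_add, pow_mul', hao.neg_one_pow]
    have hpow : q^((k*a+i)*h) = (q^a)^(k*h) * q^(i*h) := by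
      rw [← pow_mul, ← pow_add]
      congr 1
      ring
    simp only [hF, hg]
    rw [hqn, mul_pow, hsign, hpow]
    ring
  have hinj : ∀ i : ℕ, Function.Injective (fun k : ℕ => k * a + i) := by
    intro i m k hmk
    simp only at hmk
    exact Nat.eq_of_mul_eq_mul_right ha (Nat.add_right_cancel hmk)
  have hre : ∑' m, F m = ∑ i ∈ Finset.range a, ∑' k : ℕ, F (k * a + i) := by
    have hfib : ∀ i : Fin a, Summable (fun k : ℕ => F (k * a + (i:ℕ))) :=
      fun i => hFs.comp_injective (hinj i)
    have e1 : ∑' p : Fin a × ℕ, F (p.2 * a + (p.1:ℕ)) = ∑' m, F m :=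
      ((Equiv.prodComm (Fin a) ℕ).trans (Nat.divModEquiv a).symm).tsum_eq F
    have hs2 : Summable (fun p : Fin a × ℕ => F (p.2 * a + (p.1:ℕ))) :=
      (((Equiv.prodComm (Fin a) ℕ).trans (Nat.divModEquiv a).symm).summable_iff).mpr hFs
    rw [← e1, Summable.tsum_prod' hs2 hfib,
      ← Fin.sum_univ_eq_sum_range (fun i => ∑' k : ℕ, F (k * a + i)) a, ← tsum_fintype (L := SummationFilter.unconditional (Fin a))]
  have hsum : ∀ i ∈ Finset.range a,
      ∑' k : ℕ, F (k * a + i) = (A ^ (n-1) * ((-1:ℝ)^i * q^(i*h))) * ∑' k, g i k := by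
    intro i hi
    rw [tsum_congr (key i (Finset.mem_range.mp hi)), tsum_mul_left]
  simp only [hqGenocchi]
  rw [show (∑' m : ℕ, (-1:ℝ)^m * q^(m*h) * (qnum (q^α) ((m:ℝ)+x))^(n-1)) = ∑' m, F m from rfl,
    hre, Finset.sum_congr rfl hsum, Finset.mul_sum, Finset.mul_sum]
  apply Finset.sum_congr rfl
  intro i hi
  have : (∑' m : ℕ, (-1:ℝ)^m * (q^a)^(m*h) *
      (qnum ((q^a:ℝ)^α) ((m:ℝ) + (x+(i:ℝ))/(a:ℝ)))^(n-1)) = ∑' k, g i k := rfl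
  rw [this]
  field_simp
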